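/- Let P, X, Y be points of the Euclidean plane with X ≠ P and Y ≠ P. If the angle ∠ X P Y is strictly less than π/3, then dist X Y < max (dist P X) (dist P Y). -/
import Mathlib


open EuclideanGeometry Real

/-- If the angle at `P` between `X` and `Y` is strictly less than `π/3`, then the distance
from `X` to `Y` is strictly less than the maximum of the distances from `P` to `X` and `Y`. -/
theorem angle_lt_pi_div_three_dist_lt (P X Y : EuclideanSpace ℝ (Fin 2))
    (hX : X ≠ P) (hY : Y ≠ P) (h : ∠ X P Y < π / 3) :
    dist X Y < max (dist P X) (dist P Y) := by
  have hlaw := EuclideanGeometry.law_cos X P Y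
  have hcos : Real.cos (∠ X P Y) > 1 / 2 := by
    have h1 : Real.cos (π / 3) < Real.cos (∠ X P Y) := by
      apply Real.strictAntiOn_cos
        ⟨EuclideanGeometry.angle_nonneg _ _ _, EuclideanGeometry.angle_le_pi _ _ _⟩
        ⟨by positivity, by linarith [Real.pi_pos]⟩ h
    rwa [Real.cos_pi_div_three] at h1
  have ha : 0 < dist X P := dist_pos.2 hX
  have hb : 0 < dist Y P := dist_pos.2 hY
  have hxy : 0 ≤ dist X Y := dist_nonneg
  have hXP : dist P X = dist X P := dist_comm _ _
  have hYP : dist P Y = dist Y P := dist_comm _ _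
  have hkey : dist X P * dist Y P < 2 * dist X P * dist Y P * Real.cos (∠ X P Y) := by
    nlinarith [mul_pos ha hb]
  rcases le_total (dist X P) (dist Y P) with hle | hle
  · have : dist X Y < dist Y P := by
      nlinarith [sq_nonneg (dist X P - dist Y P), hkey]
    rw [hYP]
    exact lt_max_of_lt_right this
  · have : dist X Y < dist X P := by
      nlinarith [sq_nonneg (dist X P - dist Y P), hkey]
    rw [hXP]
    exact lt_max_of_lt_left this
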